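/- Let {C₁^(i)}_i and {C₂^(i)}_i each be balanced ensembles over the same index set I of sizes q^{k₁} and q^{k₂} respectively, with (C₁^(i), C₂^(i)) conjugate pairs, and let the nonzero words of 𝔽_q^n be partitioned into m type classes T_Q. Then there exists an index i such that simultaneously for all type classes Q and both j ∈ {1,2}: |C_j^(i) ∩ T_Q| ≤ 2m·q^{k_j − n}·(q^n/(q^n−1))·|T_Q|. -/

import Mathlib

def dualCode {F : Type*} [CommRing F] {n : ℕ} (C : Submodule F (Fin n → F)) :
    Submodule F (Fin n → F) where
  carrier := {y | ∀ x ∈ C, dotProduct x y = 0}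
  add_mem' := by
    intro y z hy hz x hx
    simp [dotProduct_add, hy x hx, hz x hx]
  zero_mem' := by
    intro x hx
    simp
  smul_mem' := by
    intro c y hy x hx
    simp [dotProduct_smul, hy x hx]

open Finset

lemma natCard_subtype_eq {α : Type*} [Fintype α] (P : α → Prop) [DecidablePred P] :
    Nat.card {x // P x} = (Finset.univ.filter P).card := by
  rw [Nat.card_eq_fintype_card, Fintype.card_subtype]

lemma double_count {β : Type*} [Fintype β] {I : Type*} [Fintype I]
    (S : I → Set β) (V : ℕ) (Tset : Set β)
    (hbal : ∀ x ∈ Tset, Nat.card {i : I // x ∈ S i} = V) :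
    ∑ i, Nat.card {x : β // x ∈ Tset ∧ x ∈ S i} = Nat.card Tset * V := by
  classical
  have h0 : ∀ i, Nat.card {x : β // x ∈ Tset ∧ x ∈ S i}
      = (univ.filter (fun x => x ∈ Tset ∧ x ∈ S i)).card := fun i => natCard_subtype_eq _
  have hT : Nat.card Tset = (univ.filter (fun x => x ∈ Tset)).card := natCard_subtype_eq _
  simp only [h0, hT]
  have h1 : ∀ i, (univ.filter (fun x => x ∈ Tset ∧ x ∈ S i)).card
      = ∑ x ∈ univ.filter (fun x => x ∈ Tset), (if x ∈ S i then 1 else 0) := by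
    intro i
    rw [← Finset.filter_filter, Finset.card_filter]
  simp only [h1]
  rw [Finset.sum_comm]
  have h2 : ∀ x ∈ univ.filter (fun x => x ∈ Tset),
      (∑ i : I, (if x ∈ S i then 1 else 0)) = V := by
    intro x hx
    rw [← Finset.card_filter, ← natCard_subtype_eq]
    exact hbal x (Finset.mem_filter.mp hx).2
  rw [Finset.sum_congr rfl h2, Finset.sum_const, smul_eq_mul]

lemma V_count_eq {β : Type*} [Fintype β] [DecidableEq β] {I : Type*} [Fintype I]
    (S : I → Set β) (z : β) (hz : ∀ i, z ∈ S i) (c V : ℕ)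
    (hdim : ∀ i, Nat.card (S i) = c)
    (hbal : ∀ x : β, x ≠ z → Nat.card {i : I // x ∈ S i} = V) :
    (Fintype.card β - 1) * V = Fintype.card I * (c - 1) := by
  classical
  have h := double_count S V {x | x ≠ z} (fun x hx => hbal x hx)
  have hT : Nat.card {x : β | x ≠ z} = Fintype.card β - 1 := by
    rw [show Nat.card {x : β | x ≠ z} = (univ.filter (fun x => x ≠ z)).card from
      natCard_subtype_eq _, Finset.filter_ne', Finset.card_erase_of_mem (mem_univ _), card_univ]
  have hi : ∀ i, Nat.card {x : β // x ∈ {x : β | x ≠ z} ∧ x ∈ S i} = c - 1 := by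
    intro i
    rw [show Nat.card {x : β // x ∈ {x : β | x ≠ z} ∧ x ∈ S i}
        = (univ.filter (fun x => x ≠ z ∧ x ∈ S i)).card from natCard_subtype_eq _]
    have he : univ.filter (fun x => x ≠ z ∧ x ∈ S i)
        = (univ.filter (fun x => x ∈ S i)).erase z := by
      ext x
      simp [Finset.mem_erase, and_comm]
    rw [he, Finset.card_erase_of_mem (by simp [hz i]), ← natCard_subtype_eq, hdim i]
  rw [Finset.sum_congr rfl (fun i _ => hi i), Finset.sum_const, smul_eq_mul, card_univ, hT] at h
  omega


/-- Given two balanced ensembles `{C₁^(i)}` and `{C₂^(i)}` over the same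
index set, of sizes `q^{k₁}` and `q^{k₂}` respectively, forming conjugate pairs, and a
partition of the nonzero words into `m` type classes `T_Q`, there exists an index `i`
such that simultaneously for all type classes `Q` and both `j ∈ {1,2}`:
`|C_j^(i) ∩ T_Q| ≤ 2m q^{k_j − n} (q^n/(q^n−1)) |T_Q|`. -/
theorem exists_good_conjugate_pair_in_balanced_ensemble {F : Type*} [Field F] [Fintype F]
    {n k₁ k₂ : ℕ} {I : Type*} [Fintype I] [Nonempty I]
    (C₁ C₂ : I → Submodule F (Fin n → F))
    (hconj : ∀ i, dualCode (C₂ i) ≤ C₁ i)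
    (hdim₁ : ∀ i, Nat.card (C₁ i) = Fintype.card F ^ k₁)
    (hdim₂ : ∀ i, Nat.card (C₂ i) = Fintype.card F ^ k₂)
    (V₁ V₂ : ℕ)
    (hbal₁ : ∀ x : Fin n → F, x ≠ 0 → Nat.card {i : I // x ∈ C₁ i} = V₁)
    (hbal₂ : ∀ x : Fin n → F, x ≠ 0 → Nat.card {i : I // x ∈ C₂ i} = V₂)
    {m : ℕ} (T : Fin m → Set (Fin n → F))
    (hdisj : ∀ Q Q', Q ≠ Q' → Disjoint (T Q) (T Q'))
    (hcover : (⋃ Q, T Q) = {x : Fin n → F | x ≠ 0}) :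
    ∃ i : I, ∀ Q : Fin m,
      (Nat.card {x : Fin n → F // x ∈ T Q ∧ x ∈ C₁ i} : ℚ) ≤
        2 * m * ((Fintype.card F : ℚ) ^ k₁ / (Fintype.card F : ℚ) ^ n) *
          ((Fintype.card F : ℚ) ^ n / ((Fintype.card F : ℚ) ^ n - 1)) *
          (Nat.card (T Q) : ℚ) ∧
      (Nat.card {x : Fin n → F // x ∈ T Q ∧ x ∈ C₂ i} : ℚ) ≤
        2 * m * ((Fintype.card F : ℚ) ^ k₂ / (Fintype.card F : ℚ) ^ n) *
          ((Fintype.card F : ℚ) ^ n / ((Fintype.card F : ℚ) ^ n - 1)) *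
          (Nat.card (T Q) : ℚ) := by
  classical
  obtain ⟨i0⟩ := ‹Nonempty I›
  rcases Nat.eq_zero_or_pos m with hm | hm
  · subst hm; exact ⟨i0, fun Q => Q.elim0⟩
  have hTsub : ∀ (Q : Fin m), ∀ x ∈ T Q, x ≠ 0 := by
    intro Q x hx
    have hx' : x ∈ ⋃ Q, T Q := Set.mem_iUnion_of_mem Q hx
    rw [hcover] at hx'
    exact hx'
  rcases Nat.eq_zero_or_pos n with hn | hn
  · -- n = 0 : all T Q empty
    subst hn
    refine ⟨i0, fun Q => ?_⟩
    have hTQ : T Q = ∅ := by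
      ext x
      simp only [Set.mem_empty_iff_false, iff_false]
      intro hx
      exact hTsub Q x hx (funext fun j => j.elim0)
    rw [hTQ]
    constructor <;>
    · have h1 : ∀ (C : Submodule F (Fin 0 → F)),
          Nat.card {x : Fin 0 → F // x ∈ (∅ : Set (Fin 0 → F)) ∧ x ∈ C} = 0 := by
        intro C
        haveI : IsEmpty {x : Fin 0 → F // x ∈ (∅ : Set (Fin 0 → F)) ∧ x ∈ C} := ⟨fun x => x.2.1⟩
        exact Nat.card_of_isEmpty
      rw [h1]
      simp
  -- main case
  set q := Fintype.card F with hq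
  have hq2 : 2 ≤ q := Fintype.one_lt_card
  have hq1 : (1:ℚ) < (q:ℚ) := by exact_mod_cast hq2
  have hqn1 : (1:ℚ) < (q:ℚ) ^ n := one_lt_pow₀ hq1 hn.ne'
  have hpos : (0:ℚ) < (q:ℚ) ^ n - 1 := by linarith
  have hqn0 : ((q:ℚ) ^ n) ≠ 0 := by positivity
  have hIpos : (0:ℚ) < Fintype.card I := by
    have := Fintype.card_pos (α := I); exact_mod_cast this
  have hmpos : (0:ℚ) < (m:ℚ) := by exact_mod_cast hm
  let bound : ℕ → Fin m → ℚ := fun k Q =>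
    2 * m * ((q:ℚ) ^ k / (q:ℚ) ^ n) * ((q:ℚ) ^ n / ((q:ℚ) ^ n - 1)) * (Nat.card (T Q) : ℚ)
  have key : ∀ (C : I → Submodule F (Fin n → F)) (k V : ℕ),
      (∀ i, Nat.card (C i) = q ^ k) →
      (∀ x : Fin n → F, x ≠ 0 → Nat.card {i : I // x ∈ C i} = V) →
      ∀ Q : Fin m,
        (((univ.filter (fun i =>
            bound k Q < (Nat.card {x : Fin n → F // x ∈ T Q ∧ x ∈ C i} : ℚ))).card : ℚ))
          * (2 * m) < (Fintype.card I : ℚ) := by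
    intro C k V hdim hbal Q
    set cnt : I → ℕ := fun i => Nat.card {x : Fin n → F // x ∈ T Q ∧ x ∈ C i} with hcnt
    set bad := univ.filter (fun i => bound k Q < (cnt i : ℚ)) with hbad
    have hdc : ∑ i, cnt i = Nat.card (T Q) * V :=
      double_count (fun i => (C i : Set (Fin n → F))) V (T Q)
        (fun x hx => hbal x (hTsub Q x hx))
    have hVeq : (q ^ n - 1) * V = Fintype.card I * (q ^ k - 1) := by
      have h := V_count_eq (fun i => (C i : Set (Fin n → F))) 0 (fun i => (C i).zero_mem)
        (q ^ k) V hdim hbal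
      rwa [show Fintype.card (Fin n → F) = q ^ n by simp [hq]] at h
    have hcnt_le : ∀ i, cnt i ≤ Nat.card (T Q) := by
      intro i
      exact Nat.card_mono (Set.toFinite (T Q)) (fun x hx => hx.1)
    rcases Finset.eq_empty_or_nonempty bad with he | hne
    · rw [he]
      simpa using hIpos
    · have htQpos : 0 < Nat.card (T Q) := by
        obtain ⟨i, hi⟩ := hne
        have hib := (Finset.mem_filter.mp hi).2
        by_contra h0
        push_neg at h0
        have h0' : Nat.card (T Q) = 0 := Nat.le_zero.mp h0
        have hc0 : cnt i = 0 := Nat.le_zero.mp (h0' ▸ hcnt_le i)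
        rw [hc0] at hib
        have hz : (Nat.card (T Q) : ℚ) = 0 := by exact_mod_cast h0'
        have hb0 : bound k Q = 0 := by
          show 2 * (m:ℚ) * ((q:ℚ) ^ k / (q:ℚ) ^ n) * ((q:ℚ) ^ n / ((q:ℚ) ^ n - 1))
              * (Nat.card (T Q) : ℚ) = 0
          rw [hz, mul_zero]
        rw [hb0] at hib
        simp at hib
      have htQposQ : (0:ℚ) < (Nat.card (T Q) : ℚ) := by exact_mod_cast htQpos
      have hqk : (0:ℚ) < (q:ℚ) ^ k := by positivity
      have hbound_eq : bound k Q
          = 2 * m * (q:ℚ) ^ k * (Nat.card (T Q) : ℚ) / ((q:ℚ) ^ n - 1) := by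
        show 2 * (m:ℚ) * ((q:ℚ) ^ k / (q:ℚ) ^ n) * ((q:ℚ) ^ n / ((q:ℚ) ^ n - 1))
            * (Nat.card (T Q) : ℚ) = _
        field_simp
      have e1 : (bad.card : ℚ) * bound k Q < ∑ i ∈ bad, (cnt i : ℚ) := by
        have h := Finset.sum_lt_sum_of_nonempty hne
          (f := fun _ => bound k Q) (g := fun i => (cnt i : ℚ))
          (fun i hi => (Finset.mem_filter.mp hi).2)
        simpa [Finset.sum_const, nsmul_eq_mul] using h
      have e2 : ∑ i ∈ bad, (cnt i : ℚ) ≤ ∑ i : I, (cnt i : ℚ) :=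
        Finset.sum_le_sum_of_subset_of_nonneg (Finset.subset_univ _)
          (fun i _ _ => Nat.cast_nonneg _)
      have e3 : ∑ i : I, (cnt i : ℚ) = (Nat.card (T Q) : ℚ) * V := by
        exact_mod_cast congrArg (Nat.cast : ℕ → ℚ) hdc
      have e4 : ((q:ℚ) ^ n - 1) * V = (Fintype.card I : ℚ) * ((q:ℚ) ^ k - 1) := by
        have h1 : (1:ℕ) ≤ q ^ n := Nat.one_le_pow _ _ (by omega)
        have h2 : (1:ℕ) ≤ q ^ k := Nat.one_le_pow _ _ (by omega)
        have := congrArg (Nat.cast : ℕ → ℚ) hVeq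
        push_cast [h1, h2] at this
        convert this using 2 <;> push_cast <;> ring
      have e1' : (bad.card : ℚ) * (2 * m * (q:ℚ) ^ k * (Nat.card (T Q) : ℚ)) / ((q:ℚ) ^ n - 1)
          < (Nat.card (T Q) : ℚ) * V := by
        rw [hbound_eq, ← mul_div_assoc] at e1
        exact lt_of_lt_of_le e1 (e2.trans_eq e3)
      have e5 : (bad.card : ℚ) * (2 * m * (q:ℚ) ^ k * (Nat.card (T Q) : ℚ))
          < (Nat.card (T Q) : ℚ) * V * ((q:ℚ) ^ n - 1) := (div_lt_iff₀ hpos).mp e1'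
      have e6 : (Nat.card (T Q) : ℚ) * V * ((q:ℚ) ^ n - 1)
          = (Nat.card (T Q) : ℚ) * ((Fintype.card I : ℚ) * ((q:ℚ) ^ k - 1)) := by
        rw [← e4]; ring
      refine lt_of_mul_lt_mul_right ?_ (le_of_lt (mul_pos hqk htQposQ))
      nlinarith [e5, e6, mul_pos hIpos htQposQ]
  have hkey₁ := key C₁ k₁ V₁ hdim₁ hbal₁
  have hkey₂ := key C₂ k₂ V₂ hdim₂ hbal₂
  set bad₁ : Fin m → Finset I := fun Q => univ.filter (fun i =>
    bound k₁ Q < (Nat.card {x : Fin n → F // x ∈ T Q ∧ x ∈ C₁ i} : ℚ)) with hb1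
  set bad₂ : Fin m → Finset I := fun Q => univ.filter (fun i =>
    bound k₂ Q < (Nat.card {x : Fin n → F // x ∈ T Q ∧ x ∈ C₂ i} : ℚ)) with hb2
  set Badall : Finset I := univ.biUnion (fun Q : Fin m => bad₁ Q ∪ bad₂ Q) with hball
  have hcard : Badall.card < Fintype.card I := by
    have h1 : Badall.card ≤ ∑ Q, ((bad₁ Q).card + (bad₂ Q).card) :=
      (Finset.card_biUnion_le).trans (Finset.sum_le_sum fun Q _ =>
        (Finset.card_union_le _ _))
    have h2 : ((∑ Q, ((bad₁ Q).card + (bad₂ Q).card) : ℕ) : ℚ) * (2 * m)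
        < (Fintype.card I : ℚ) * (2 * m) := by
      push_cast
      rw [Finset.sum_mul]
      have hstep : ∀ Q : Fin m, (((bad₁ Q).card : ℚ) + ((bad₂ Q).card : ℚ)) * (2 * m)
          < 2 * (Fintype.card I : ℚ) := by
        intro Q
        have := hkey₁ Q
        have := hkey₂ Q
        nlinarith [hkey₁ Q, hkey₂ Q]
      have hne : (univ : Finset (Fin m)).Nonempty := by
        haveI : Nonempty (Fin m) := Fin.pos_iff_nonempty.mp hm
        exact Finset.univ_nonempty
      have := Finset.sum_lt_sum_of_nonempty hne
        (f := fun Q => (((bad₁ Q).card : ℚ) + ((bad₂ Q).card : ℚ)) * (2 * m))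
        (g := fun _ => 2 * (Fintype.card I : ℚ)) (fun Q _ => hstep Q)
      rw [Finset.sum_const, card_univ, Fintype.card_fin, nsmul_eq_mul] at this
      calc ∑ Q : Fin m, (((bad₁ Q).card : ℚ) + ((bad₂ Q).card : ℚ)) * (2 * m)
          < (m : ℚ) * (2 * (Fintype.card I : ℚ)) := this
        _ = (Fintype.card I : ℚ) * (2 * m) := by ring
    have hmul : (0:ℚ) < 2 * m := by positivity
    have h3 : ((∑ Q, ((bad₁ Q).card + (bad₂ Q).card) : ℕ) : ℚ) < (Fintype.card I : ℚ) :=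
      lt_of_mul_lt_mul_right h2 (le_of_lt hmul)
    have h4 : (∑ Q, ((bad₁ Q).card + (bad₂ Q).card)) < Fintype.card I := by exact_mod_cast h3
    omega
  have hex : ∃ i, i ∉ Badall := by
    by_contra h
    push_neg at h
    have hsub : (univ : Finset I) ⊆ Badall := fun i _ => h i
    have := Finset.card_le_card hsub
    rw [card_univ] at this
    omega
  obtain ⟨i, hi⟩ := hex
  refine ⟨i, fun Q => ?_⟩
  have h1 : i ∉ bad₁ Q := fun h => hi (Finset.mem_biUnion.mpr
    ⟨Q, mem_univ _, Finset.mem_union_left _ h⟩)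
  have h2 : i ∉ bad₂ Q := fun h => hi (Finset.mem_biUnion.mpr
    ⟨Q, mem_univ _, Finset.mem_union_right _ h⟩)
  rw [hb1] at h1
  rw [hb2] at h2
  simp only [Finset.mem_filter, mem_univ, true_and, not_lt] at h1 h2
  exact ⟨h1, h2⟩
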